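/- Let g = su(2) ⊕ su(2) ⊕ su(2) and define j₊, j₋ : su(2) → g by j₊(X) = (X, -2X, X) and j₋(X) = (-2X, X, X). Let h = {(X,X,X) : X ∈ su(2)} be the diagonal subalgebra and let π : g → V⁺ ⊕ V⁻ be the projection along h, where V± = image of j±. Then for all x, y ∈ su(2): π([j₊(x), j₊(y)]) = -j₊([x,y]), π([j₋(x), j₋(y)]) = -j₋([x,y]), and π([j₊(x), j₋(y)]) = j₊([x,y]) + j₋([x,y]). -/
import Mathlib


open Matrix

/-- 2×2 complex matrices, with the commutator Lie bracket. -/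
abbrev M2 := Matrix (Fin 2) (Fin 2) ℂ

/-- g = su(2) ⊕ su(2) ⊕ su(2) (as a subset of M2 × M2 × M2 with componentwise bracket). -/
abbrev G3 := M2 × M2 × M2

def jPlus (X : M2) : G3 := (X, -(2 : ℂ) • X, X)
def jMinus (X : M2) : G3 := (-(2 : ℂ) • X, X, X)

/-- For the projection π of su(2)³ onto V⁺ ⊕ V⁻ along the diagonal subalgebra h
(characterized by vanishing on h and fixing V⁺ and V⁻), one has
π([j₊x, j₊y]) = -j₊([x,y]), π([j₋x, j₋y]) = -j₋([x,y]) and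
π([j₊x, j₋y]) = j₊([x,y]) + j₋([x,y]) for all x, y ∈ su(2). -/
theorem stmt1 (π : G3 →ₗ[ℂ] G3)
    (hker : ∀ X : M2, π (X, X, X) = 0)
    (hplus : ∀ X : M2, π (jPlus X) = jPlus X)
    (hminus : ∀ X : M2, π (jMinus X) = jMinus X)
    (x y : M2) (hx : xᴴ = -x) (hx' : x.trace = 0) (hy : yᴴ = -y) (hy' : y.trace = 0) :
    π ⁅jPlus x, jPlus y⁆ = -jPlus ⁅x, y⁆ ∧
    π ⁅jMinus x, jMinus y⁆ = -jMinus ⁅x, y⁆ ∧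
    π ⁅jPlus x, jMinus y⁆ = jPlus ⁅x, y⁆ + jMinus ⁅x, y⁆ := by
  set Z : M2 := ⁅x, y⁆ with hZ
  have hZdef : Z = x * y - y * x := by rw [hZ, Ring.lie_def]
  have h1 : ⁅jPlus x, jPlus y⁆ =
      (((2:ℂ)•Z, (2:ℂ)•Z, (2:ℂ)•Z) : G3) + jPlus (-Z) := by
    simp only [jPlus, Ring.lie_def, Prod.ext_iff, Prod.fst_mul, Prod.snd_mul,
      Prod.fst_sub, Prod.snd_sub, Prod.fst_add, Prod.snd_add, hZdef]
    refine ⟨?_, ?_, ?_⟩ <;>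
    · try simp only [smul_mul_assoc, mul_smul_comm, smul_smul]
      module
  have h2 : ⁅jMinus x, jMinus y⁆ =
      (((2:ℂ)•Z, (2:ℂ)•Z, (2:ℂ)•Z) : G3) + jMinus (-Z) := by
    simp only [jMinus, Ring.lie_def, Prod.ext_iff, Prod.fst_mul, Prod.snd_mul,
      Prod.fst_sub, Prod.snd_sub, Prod.fst_add, Prod.snd_add, hZdef]
    refine ⟨?_, ?_, ?_⟩ <;>
    · try simp only [smul_mul_assoc, mul_smul_comm, smul_smul]
      module
  have h3 : ⁅jPlus x, jMinus y⁆ =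
      ((-Z, -Z, -Z) : G3) + jPlus Z + jMinus Z := by
    simp only [jPlus, jMinus, Ring.lie_def, Prod.ext_iff, Prod.fst_mul, Prod.snd_mul,
      Prod.fst_sub, Prod.snd_sub, Prod.fst_add, Prod.snd_add, hZdef]
    refine ⟨?_, ?_, ?_⟩ <;>
    · try simp only [smul_mul_assoc, mul_smul_comm, smul_smul]
      module
  have hjp : ∀ X : M2, jPlus (-X) = -jPlus X := by
    intro X; simp [jPlus, Prod.ext_iff]
  have hjm : ∀ X : M2, jMinus (-X) = -jMinus X := by
    intro X; simp [jMinus, Prod.ext_iff]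
  refine ⟨?_, ?_, ?_⟩
  · rw [h1, map_add, hplus, hjp]
    have := hker ((2:ℂ)•Z)
    rw [this, zero_add]
  · rw [h2, map_add, hminus, hjm]
    have := hker ((2:ℂ)•Z)
    rw [this, zero_add]
  · rw [h3, map_add, map_add, hplus, hminus]
    have := hker (-Z)
    rw [this, zero_add]
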